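/- arXiv:1408.0550 — 5 statements merged into one kernel-verified Lean document; each statement's English description precedes it below -/
import Mathlib

section
/- For relatively prime positive integers a and b, a positive integer n is a gap of the numerical semigroup generated by a and b (i.e., n is not representable as a nonnegative integer combination of a and b) if and only if n = ab - ja - hb for some integers j with 1 ≤ j ≤ b-1 and h with 1 ≤ h ≤ a-1. -/
theorem gaps_of_two_generated_semigroup (a b : ℕ) (ha : 0 < a) (hb : 0 < b)
    (hab : Nat.Coprime a b) (n : ℕ) (hn : 0 < n) :
    (¬ ∃ x y : ℕ, n = x * a + y * b) ↔
      ∃ j h : ℕ, 1 ≤ j ∧ j ≤ b - 1 ∧ 1 ≤ h ∧ h ≤ a - 1 ∧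
        (n : ℤ) = (a : ℤ) * b - j * a - h * b := by
  have hco : IsCoprime (a : ℤ) (b : ℤ) := Nat.isCoprime_iff_coprime.mpr hab
  have hbZ : (0 : ℤ) < b := by exact_mod_cast hb
  have haZ : (0 : ℤ) < a := by exact_mod_cast ha
  constructor
  · intro hrep
    obtain ⟨u, v, huv⟩ := hco
    set X : ℤ := (n * u) % b with hXdef
    have hX0 : 0 ≤ X := Int.emod_nonneg _ (by omega)
    have hXb : X < b := Int.emod_lt_of_pos _ hbZ
    have hdvd : (n : ℤ) * u - X = b * ((n * u) / b) := by
      rw [hXdef, Int.emod_def]; ring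
    set Y : ℤ := ((n : ℤ) * u / b) * a + n * v with hYdef
    have hXY : (n : ℤ) = X * a + Y * b := by
      have h1 : (n : ℤ) = n * u * a + n * v * b := by
        have := huv
        nlinarith [huv]
      rw [hYdef]
      have : (n : ℤ) * u = X + b * ((n * u) / b) := by linarith [hdvd]
      nlinarith [this, h1]
    have hY : Y < 0 := by
      by_contra hY
      push_neg at hY
      apply hrep
      refine ⟨X.toNat, Y.toNat, ?_⟩
      have : ((n : ℤ)) = (X.toNat : ℤ) * a + (Y.toNat : ℤ) * b := by
        rw [Int.toNat_of_nonneg hX0, Int.toNat_of_nonneg hY]; exact hXY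
      exact_mod_cast this
    have hX1 : 1 ≤ X := by
      rcases lt_or_ge X 1 with h1 | h1
      · exfalso
        have hX0' : X = 0 := le_antisymm (by omega) hX0
        rw [hX0'] at hXY
        have : (0 : ℤ) < n := by exact_mod_cast hn
        nlinarith
      · exact h1
    have hYa : 1 - (a : ℤ) ≤ Y := by
      by_contra hc
      push_neg at hc
      have hY' : Y ≤ -a := by omega
      have : (n : ℤ) ≤ X * a - a * b := by nlinarith
      have hnpos : (0 : ℤ) < n := by exact_mod_cast hn
      nlinarith
    refine ⟨(b - X).toNat, (-Y).toNat, ?_, ?_, ?_, ?_, ?_⟩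
    · omega
    · omega
    · omega
    · omega
    · have h1 : ((b - X).toNat : ℤ) = b - X := Int.toNat_of_nonneg (by omega)
      have h2 : ((-Y).toNat : ℤ) = -Y := Int.toNat_of_nonneg (by omega)
      rw [h1, h2]
      linarith [hXY]
  · rintro ⟨j, h, hj1, hjb, hh1, hha, heq⟩ ⟨x, y, hxy⟩
    have hjZ : (1 : ℤ) ≤ j := by exact_mod_cast hj1
    have hjbZ : (j : ℤ) ≤ b - 1 := by
      have : (j : ℤ) ≤ ((b - 1 : ℕ) : ℤ) := by exact_mod_cast hjb
      omega
    have hhZ : (1 : ℤ) ≤ h := by exact_mod_cast hh1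
    have hhaZ : (h : ℤ) ≤ a - 1 := by
      have : (h : ℤ) ≤ ((a - 1 : ℕ) : ℤ) := by exact_mod_cast hha
      omega
    have hxyZ : (n : ℤ) = x * a + y * b := by exact_mod_cast hxy
    have key : ((b : ℤ) - j - x) * a = (y + h) * b := by linear_combination hxyZ - heq
    have hdvd : (b : ℤ) ∣ (b - j - x) := by
      have : (b : ℤ) ∣ (b - j - x) * a := ⟨y + h, by linear_combination key⟩
      exact (hco.symm).dvd_of_dvd_mul_right this
    have hpos : 0 < (b : ℤ) - j - x := by
      have hy0 : (0 : ℤ) ≤ y := by exact_mod_cast Nat.zero_le y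
      have hyh : (0 : ℤ) < y + h := by omega
      have h2 : 0 < ((b : ℤ) - j - x) * a := key ▸ mul_pos hyh hbZ
      by_contra hc
      push_neg at hc
      have := mul_nonpos_of_nonpos_of_nonneg hc haZ.le
      linarith
    have := Int.le_of_dvd hpos hdvd
    have hx0 : (0 : ℤ) ≤ x := by exact_mod_cast Nat.zero_le x
    omega
end

section
/- Let a, b, c be positive integers with gcd(a,b,c) = 1, p = gcd(a,b), q = gcd(a,c), r = gcd(b,c), and write a = dpq, b = epr, c = fqr. For positive integers m and n, if s = (m-1)d + (n-1)e - f is a maximal element of the poset P(d,e,f) of gaps of S(d,e,f), then t = (mr-1)dpq + (nq-1)epr - fqr is a gap of S(a,b,c), i.e., t is not a nonnegative integer combination of a, b, c. -/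
/-- Membership in the numerical semigroup generated by x, y, z (viewed in ℤ). -/
def SemiZ (x y z n : ℤ) : Prop := ∃ i j k : ℕ, n = (i : ℤ) * x + (j : ℤ) * y + (k : ℤ) * z

/-- n is a maximal element of the poset of gaps of S(x,y,z). -/
def MaxGapZ (x y z n : ℤ) : Prop :=
  (0 < n ∧ ¬ SemiZ x y z n) ∧ SemiZ x y z (n + x) ∧ SemiZ x y z (n + y) ∧ SemiZ x y z (n + z)

theorem maximal_gap_transfer (a b c p q r d e f : ℕ)
    (ha : 0 < a) (hb : 0 < b) (hc : 0 < c)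
    (hd : 0 < d) (he : 0 < e) (hf : 0 < f)
    (habc : Nat.gcd (Nat.gcd a b) c = 1)
    (hp : p = Nat.gcd a b) (hq : q = Nat.gcd a c) (hr : r = Nat.gcd b c)
    (hda : a = d * p * q) (heb : b = e * p * r) (hfc : c = f * q * r)
    (m n : ℕ) (hm : 1 ≤ m) (hn : 1 ≤ n)
    (hmax : MaxGapZ d e f (((m : ℤ) - 1) * d + ((n : ℤ) - 1) * e - f)) :
    0 < ((m : ℤ) * r - 1) * (d * p * q) + ((n : ℤ) * q - 1) * (e * p * r) - f * q * r ∧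
      ¬ SemiZ a b c
        (((m : ℤ) * r - 1) * (d * p * q) + ((n : ℤ) * q - 1) * (e * p * r) - f * q * r) := by
  subst hda heb hfc
  have hp0 : 0 < p := by
    rcases Nat.eq_zero_or_pos p with h | h
    · subst h; simp at ha
    · exact h
  have hq0 : 0 < q := by
    rcases Nat.eq_zero_or_pos q with h | h
    · subst h; simp at ha
    · exact h
  have hr0 : 0 < r := by
    rcases Nat.eq_zero_or_pos r with h | h
    · subst h; simp at hb
    · exact h
  -- coprimality facts
  have h1 : Nat.Coprime (d * q) (e * r) := by
    have h := hp
    rw [show d * p * q = p * (d * q) by ring, show e * p * r = p * (e * r) by ring,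
      Nat.gcd_mul_left] at h
    exact Nat.eq_of_mul_eq_mul_left hp0 (by rw [mul_one]; exact h.symm)
  have h2 : Nat.Coprime (d * p) (f * r) := by
    have h := hq
    rw [show d * p * q = q * (d * p) by ring, show f * q * r = q * (f * r) by ring,
      Nat.gcd_mul_left] at h
    exact Nat.eq_of_mul_eq_mul_left hq0 (by rw [mul_one]; exact h.symm)
  have h3 : Nat.Coprime (e * p) (f * q) := by
    have h := hr
    rw [show e * p * r = r * (e * p) by ring, show f * q * r = r * (f * q) by ring,
      Nat.gcd_mul_left] at h
    exact Nat.eq_of_mul_eq_mul_left hr0 (by rw [mul_one]; exact h.symm)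
  have cdr : Nat.Coprime d r :=
    (Nat.Coprime.coprime_dvd_left (dvd_mul_right d q) h1).coprime_dvd_right (dvd_mul_left r e)
  have cqr : Nat.Coprime q r :=
    (Nat.Coprime.coprime_dvd_left (dvd_mul_left q d) h1).coprime_dvd_right (dvd_mul_left r e)
  have cpr : Nat.Coprime p r :=
    (Nat.Coprime.coprime_dvd_left (dvd_mul_left p d) h2).coprime_dvd_right (dvd_mul_left r f)
  have cqe : Nat.Coprime q e :=
    (Nat.Coprime.coprime_dvd_left (dvd_mul_left q d) h1).coprime_dvd_right (dvd_mul_right e r)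
  have cqp : Nat.Coprime q p :=
    ((Nat.Coprime.coprime_dvd_left (dvd_mul_left p e) h3).coprime_dvd_right
      (dvd_mul_left q f)).symm
  have cpf : Nat.Coprime p f :=
    (Nat.Coprime.coprime_dvd_left (dvd_mul_left p e) h3).coprime_dvd_right (dvd_mul_right f q)
  have Cr : Nat.Coprime r (d * p * q) := (cdr.symm.mul_right cpr.symm).mul_right cqr.symm
  have Cq : Nat.Coprime q (e * p * r) := (cqe.mul_right cqp).mul_right cqr
  have hs := hmax.1.1
  constructor
  · have h1p : (1 : ℤ) ≤ p := by exact_mod_cast hp0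
    have h1q : (1 : ℤ) ≤ q := by exact_mod_cast hq0
    have h1r : (1 : ℤ) ≤ r := by exact_mod_cast hr0
    have A : (0 : ℤ) ≤ (d : ℤ) * p * q * ((r : ℤ) - 1) :=
      mul_nonneg (by positivity) (by linarith)
    have B : (0 : ℤ) ≤ (e : ℤ) * p * r * ((q : ℤ) - 1) :=
      mul_nonneg (by positivity) (by linarith)
    have C : (0 : ℤ) ≤ (f : ℤ) * q * r * ((p : ℤ) - 1) :=
      mul_nonneg (by positivity) (by linarith)
    have P : (0 : ℤ) < (p : ℤ) * q * r := by positivity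
    have key : ((m : ℤ) * r - 1) * ((d : ℤ) * p * q) + ((n : ℤ) * q - 1) * ((e : ℤ) * p * r)
        - (f : ℤ) * q * r
        = (p : ℤ) * q * r * (((m : ℤ) - 1) * d + ((n : ℤ) - 1) * e - f)
          + (d : ℤ) * p * q * ((r : ℤ) - 1) + (e : ℤ) * p * r * ((q : ℤ) - 1)
          + (f : ℤ) * q * r * ((p : ℤ) - 1) := by ring
    push_cast
    linarith [key, A, B, C, mul_pos P hs]
  · rintro ⟨i, j, k, heq⟩
    push_cast at heq
    have hrdvd : r ∣ (i + 1) := by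
      have hz : (r : ℤ) ∣ ((i : ℤ) + 1) * ((d : ℤ) * p * q) :=
        ⟨(m : ℤ) * (d * p * q) + (n : ℤ) * q * e * p - (e : ℤ) * p - (f : ℤ) * q
          - (j : ℤ) * (e * p) - (k : ℤ) * (f * q), by linear_combination -heq⟩
      have hz' : r ∣ (i + 1) * (d * p * q) := by exact_mod_cast hz
      exact Cr.dvd_of_dvd_mul_right hz'
    have hqdvd : q ∣ (j + 1) := by
      have hz : (q : ℤ) ∣ ((j : ℤ) + 1) * ((e : ℤ) * p * r) :=
        ⟨(m : ℤ) * r * (d * p) + (n : ℤ) * (e * p * r) - (d : ℤ) * p - (f : ℤ) * r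
          - (i : ℤ) * (d * p) - (k : ℤ) * (f * r), by linear_combination -heq⟩
      have hz' : q ∣ (j + 1) * (e * p * r) := by exact_mod_cast hz
      exact Cq.dvd_of_dvd_mul_right hz'
    obtain ⟨i', hi'⟩ := hrdvd
    obtain ⟨j', hj'⟩ := hqdvd
    have hi1 : 1 ≤ i' := Nat.pos_of_ne_zero (by rintro rfl; omega)
    have hj1 : 1 ≤ j' := Nat.pos_of_ne_zero (by rintro rfl; omega)
    have hiZ : (i : ℤ) = (r : ℤ) * (i' : ℤ) - 1 := by
      have : ((i : ℤ) + 1) = (r : ℤ) * (i' : ℤ) := by exact_mod_cast congrArg (Nat.cast : ℕ → ℤ) hi'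
      linarith
    have hjZ : (j : ℤ) = (q : ℤ) * (j' : ℤ) - 1 := by
      have : ((j : ℤ) + 1) = (q : ℤ) * (j' : ℤ) := by exact_mod_cast congrArg (Nat.cast : ℕ → ℤ) hj'
      linarith
    have hpdvd : p ∣ (k + 1) := by
      have hqr0 : ((q : ℤ) * (r : ℤ)) ≠ 0 := by positivity
      have hkeq : ((k : ℤ) + 1) * (f : ℤ)
          = (p : ℤ) * ((m : ℤ) * d + (n : ℤ) * e - (i' : ℤ) * d - (j' : ℤ) * e) := by
        apply mul_left_cancel₀ hqr0
        linear_combination -heq - (d : ℤ) * p * q * hiZ - (e : ℤ) * p * r * hjZ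
      have hz : (p : ℤ) ∣ ((k : ℤ) + 1) * (f : ℤ) := ⟨_, hkeq⟩
      have hz' : p ∣ (k + 1) * f := by exact_mod_cast hz
      exact cpf.dvd_of_dvd_mul_right hz'
    obtain ⟨k', hk'⟩ := hpdvd
    have hk1 : 1 ≤ k' := Nat.pos_of_ne_zero (by rintro rfl; omega)
    have hkZ : (k : ℤ) = (p : ℤ) * (k' : ℤ) - 1 := by
      have : ((k : ℤ) + 1) = (p : ℤ) * (k' : ℤ) := by exact_mod_cast congrArg (Nat.cast : ℕ → ℤ) hk'
      linarith
    refine hmax.1.2 ⟨i' - 1, j' - 1, k' - 1, ?_⟩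
    have c1 : ((i' - 1 : ℕ) : ℤ) = (i' : ℤ) - 1 := by
      push_cast [Nat.cast_sub hi1]; ring
    have c2 : ((j' - 1 : ℕ) : ℤ) = (j' : ℤ) - 1 := by
      push_cast [Nat.cast_sub hj1]; ring
    have c3 : ((k' - 1 : ℕ) : ℤ) = (k' : ℤ) - 1 := by
      push_cast [Nat.cast_sub hk1]; ring
    rw [c1, c2, c3]
    have hpqr0 : ((p : ℤ) * q * r) ≠ 0 := by positivity
    apply mul_left_cancel₀ hpqr0
    linear_combination heq + (d : ℤ) * p * q * hiZ + (e : ℤ) * p * r * hjZ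
      + (f : ℤ) * q * r * hkZ
end

section
/- If a < b < c are pairwise relatively prime positive integers and c is not a nonnegative integer combination of a and b, then the poset P(a,b,c) of positive integers not in S(a,b,c) has at least two distinct maximal elements. -/
attribute [local instance] Classical.propDecidable

/-- Membership in the numerical semigroup generated by x, y, z. -/
def Semi3 (x y z n : ℕ) : Prop := ∃ i j k : ℕ, n = i * x + j * y + k * z

/-- n is a maximal element of the poset of gaps of S(x,y,z). -/
def MaxGap3 (x y z n : ℕ) : Prop :=
  (0 < n ∧ ¬ Semi3 x y z n) ∧ Semi3 x y z (n + x) ∧ Semi3 x y z (n + y) ∧ Semi3 x y z (n + z)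

set_option maxHeartbeats 1000000 in
theorem two_maximal_gaps (a b c : ℕ) (ha : 0 < a) (hab : a < b) (hbc : b < c)
    (hcop1 : Nat.Coprime a b) (hcop2 : Nat.Coprime a c) (hcop3 : Nat.Coprime b c)
    (hc : ¬ ∃ i j : ℕ, c = i * a + j * b) :
    ∃ x y : ℕ, x ≠ y ∧ MaxGap3 a b c x ∧ MaxGap3 a b c y := by
  have ha2 : 2 ≤ a := by
    rcases Nat.lt_or_ge a 2 with h | h
    · have ha1 : a = 1 := by omega
      exact absurd ⟨c, 0, by simp [ha1]⟩ hc
    · exact h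
  have hb0 : 0 < b := by omega
  have hc0 : 0 < c := by omega
  obtain ⟨x, -, hx⟩ := Nat.exists_mul_mod_eq_one_of_coprime hcop1.symm (by omega)
  -- hx : b * x % a = 1
  have hwit : ∀ n : ℕ, (x * n % a) * b ≡ n [MOD a] := by
    intro n
    have h1 : (x * n % a) * b ≡ x * n * b [MOD a] := (Nat.mod_modEq (x*n) a).mul_right b
    have h2 : x * n * b = n * (b * x) := by ring
    have h3 : b * x ≡ 1 [MOD a] := by
      calc b * x ≡ b * x % a [MOD a] := (Nat.mod_modEq _ _).symm
        _ = 1 := hx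
    have h4 : n * (b * x) ≡ n * 1 [MOD a] := h3.mul_left n
    calc (x * n % a) * b ≡ x * n * b [MOD a] := h1
      _ = n * (b * x) := h2
      _ ≡ n * 1 [MOD a] := h4
      _ = n := by ring
  have hwlt : ∀ n : ℕ, (x * n % a) * b < a * b := by
    intro n
    have : x * n % a < a := Nat.mod_lt _ (by omega)
    exact (Nat.mul_lt_mul_right hb0).mpr this
  have H : ∀ n : ℕ, ∃ v, v ≡ n [MOD a] ∧ ∃ j k : ℕ, v = j * b + k * c :=
    fun n => ⟨(x * n % a) * b, hwit n, x * n % a, 0, by ring⟩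
  set m : ℕ → ℕ := fun n => Nat.find (H n) with hm_def
  have hmod : ∀ n, m n ≡ n [MOD a] := fun n => (Nat.find_spec (H n)).1
  have hrep : ∀ n, ∃ j k, m n = j * b + k * c := fun n => (Nat.find_spec (H n)).2
  have hmin : ∀ n v, v ≡ n [MOD a] → (∃ j k : ℕ, v = j * b + k * c) → m n ≤ v :=
    fun n v h1 h2 => Nat.find_min' (H n) ⟨h1, h2⟩
  have hmlt : ∀ n, m n < a * b :=
    fun n => lt_of_le_of_lt (hmin n _ (hwit n) ⟨x * n % a, 0, by ring⟩) (hwlt n)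
  have hclass : ∀ n n', n ≡ n' [MOD a] → m n = m n' := by
    intro n n' h
    apply le_antisymm
    · exact hmin n _ ((hmod n').trans h.symm) (hrep n')
    · exact hmin n' _ ((hmod n).trans h) (hrep n)
  have hmemS : ∀ n, Semi3 a b c n ↔ m n ≤ n := by
    intro n; constructor
    · rintro ⟨i, j, k, rfl⟩
      have h0 : a * i ≡ 0 [MOD a] := Nat.modEq_zero_iff_dvd.mpr ⟨i, rfl⟩
      have hv : j * b + k * c ≡ i * a + j * b + k * c [MOD a] := by
        have h1 : j * b + k * c + a * i ≡ j * b + k * c + 0 [MOD a] := h0.add_left _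
        have h2 : i * a + j * b + k * c = j * b + k * c + a * i := by ring
        rw [h2]
        simpa using h1.symm
      have h3 := hmin _ _ hv ⟨j, k, rfl⟩
      have h4 : j * b + k * c ≤ i * a + j * b + k * c := by linarith [Nat.zero_le (i * a)]
      exact h3.trans h4
    · intro h
      obtain ⟨t, ht⟩ := (Nat.modEq_iff_dvd' h).mp (hmod n)
      have hn : n = a * t + m n := (Nat.sub_eq_iff_eq_add h).mp ht
      obtain ⟨j, k, hjk⟩ := hrep n
      exact ⟨t, j, k, by rw [hn, hjk]; ring⟩
  clear hm_def
  clear_value m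
  -- basic good facts
  have good00 : m (0 * b + 0 * c) = 0 * b + 0 * c := by
    have h1 : m 0 ≤ 0 := hmin 0 0 (Nat.ModEq.refl 0) ⟨0, 0, by ring⟩
    simpa using Nat.le_zero.mp h1
  have good_rep : ∀ n j k, m n = j * b + k * c → m (j * b + k * c) = j * b + k * c := by
    intro n j k h
    have h1 : m (m n) = m n := hclass (m n) n (hmod n)
    rw [← h]; exact h1
  have good_left : ∀ j k, m ((j+1) * b + k * c) = (j+1) * b + k * c →
      m (j * b + k * c) = j * b + k * c := by
    intro j k hg
    have hle : m (j*b+k*c) ≤ j*b+k*c := hmin _ _ (Nat.ModEq.refl _) ⟨j, k, rfl⟩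
    obtain ⟨p, q, hpq⟩ := hrep (j*b+k*c)
    have h1 : m (j*b+k*c) + b ≡ j*b+k*c + b [MOD a] := (hmod (j*b+k*c)).add_right b
    have h2 : (j+1)*b + k*c = j*b+k*c + b := by ring
    have h3 : m (j*b+k*c + b) ≤ m (j*b+k*c) + b :=
      hmin _ _ h1 ⟨p+1, q, by rw [hpq]; ring⟩
    rw [h2] at hg
    omega
  have good_down : ∀ j k, m (j * b + (k+1) * c) = j * b + (k+1) * c →
      m (j * b + k * c) = j * b + k * c := by
    intro j k hg
    have hle : m (j*b+k*c) ≤ j*b+k*c := hmin _ _ (Nat.ModEq.refl _) ⟨j, k, rfl⟩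
    obtain ⟨p, q, hpq⟩ := hrep (j*b+k*c)
    have h1 : m (j*b+k*c) + c ≡ j*b+k*c + c [MOD a] := (hmod (j*b+k*c)).add_right c
    have h2 : j*b + (k+1)*c = j*b+k*c + c := by ring
    have h3 : m (j*b+k*c + c) ≤ m (j*b+k*c) + c :=
      hmin _ _ h1 ⟨p, q+1, by rw [hpq]; ring⟩
    rw [h2] at hg
    omega
  have good_left_le : ∀ d j k, m ((j+d) * b + k * c) = (j+d) * b + k * c →
      m (j * b + k * c) = j * b + k * c := by
    intro d
    induction d with
    | zero => intro j k hg; simpa using hg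
    | succ n ih =>
      intro j k hg
      have : m ((j+n) * b + k * c) = (j+n) * b + k * c := by
        have h2 : j + (n+1) = (j+n) + 1 := by omega
        rw [h2] at hg
        exact good_left (j+n) k hg
      exact ih j k this
  have good_down_le : ∀ d j k, m (j * b + (k+d) * c) = j * b + (k+d) * c →
      m (j * b + k * c) = j * b + k * c := by
    intro d
    induction d with
    | zero => intro j k hg; simpa using hg
    | succ n ih =>
      intro j k hg
      have : m (j * b + (k+n) * c) = j * b + (k+n) * c := by
        have h2 : k + (n+1) = (k+n) + 1 := by omega
        rw [h2] at hg
        exact good_down j (k+n) hg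
      exact ih j k this
  have good_mono : ∀ j k j' k', j' ≤ j → k' ≤ k → m (j * b + k * c) = j * b + k * c →
      m (j' * b + k' * c) = j' * b + k' * c := by
    intro j k j' k' h1 h2 hg
    obtain ⟨d1, rfl⟩ := Nat.exists_eq_add_of_le h1
    obtain ⟨d2, rfl⟩ := Nat.exists_eq_add_of_le h2
    exact good_down_le d2 j' k' (good_left_le d1 j' (k'+d2) hg)
  have good_lt : ∀ j k, m (j * b + k * c) = j * b + k * c → j < a ∧ k < a := by
    intro j k hg
    have h1 : j * b + k * c < a * b := by rw [← hg]; exact hmlt _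
    constructor
    · by_contra h; push_neg at h
      have : a * b ≤ j * b := Nat.mul_le_mul_right b h
      linarith [Nat.zero_le (k * c)]
    · by_contra h; push_neg at h
      have h2 : a * c ≤ k * c := Nat.mul_le_mul_right c h
      have h3 : a * b < a * c := Nat.mul_lt_mul_of_le_of_lt (le_refl a) hbc ha
      linarith [Nat.zero_le (j * b)]
  -- uniqueness of representation below a*b
  have key : ∀ j k p q : ℕ, j ≤ p → j * b + k * c = p * b + q * c → p * b + q * c < a * b →
      j = p ∧ k = q := by
    intro j k p q hjp heq hlt
    obtain ⟨d, rfl⟩ := Nat.exists_eq_add_of_le hjp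
    have hadd : (j + d) * b = j * b + d * b := by ring
    have h1 : k * c = d * b + q * c := by linarith
    have hq : q ≤ k := by
      by_contra h; push_neg at h
      have h2 : (k + 1) * c ≤ q * c := Nat.mul_le_mul_right c h
      have h3 : (k + 1) * c = k * c + c := by ring
      linarith [Nat.zero_le (d * b)]
    obtain ⟨e, rfl⟩ := Nat.exists_eq_add_of_le hq
    have hadd2 : (q + e) * c = q * c + e * c := by ring
    have h2 : e * c = d * b := by linarith
    have hcd : c ∣ d := Nat.Coprime.dvd_of_dvd_mul_right hcop3.symm ⟨e, by linarith⟩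
    have hdlt : d < c := by
      have h3 : (j + d) * b < a * b := by linarith [Nat.zero_le (q * c)]
      have h4 : j + d < a := by
        by_contra hh; push_neg at hh
        have := Nat.mul_le_mul_right b hh
        linarith
      omega
    have hd0 : d = 0 := Nat.eq_zero_of_dvd_of_lt hcd hdlt
    subst hd0
    have he0 : e = 0 := by
      have h5 : e * c = 0 := by simpa using h2
      rcases Nat.mul_eq_zero.mp h5 with h | h
      · exact h
      · omega
    omega
  have huniq : ∀ j k p q : ℕ, j * b + k * c = p * b + q * c → p * b + q * c < a * b →
      j = p ∧ k = q := by
    intro j k p q heq hlt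
    rcases le_total j p with h | h
    · exact key j k p q h heq hlt
    · have hlt2 : j * b + k * c < a * b := by rw [heq]; exact hlt
      obtain ⟨h1, h2⟩ := key p q j k h heq.symm hlt2
      exact ⟨h1.symm, h2.symm⟩
  -- the maximal gap construction
  have maxgap : ∀ j k, 1 ≤ j + k → m (j * b + k * c) = j * b + k * c →
      ¬ (m ((j+1) * b + k * c) = (j+1) * b + k * c) →
      ¬ (m (j * b + (k+1) * c) = j * b + (k+1) * c) →
      MaxGap3 a b c (j * b + k * c - a) := by
    intro j k hjk hg hg1 hg2
    have hbv : b ≤ j * b + k * c := by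
      rcases Nat.lt_or_ge j 1 with h | h
      · have hk : 1 ≤ k := by omega
        have h1 : c ≤ k * c := Nat.le_mul_of_pos_left c hk
        have h2 : j * b + k * c = k * c := by
          have : j = 0 := by omega
          rw [this]; ring
        omega
      · have h1 : 1 * b ≤ j * b := Nat.mul_le_mul_right b h
        linarith [Nat.zero_le (k * c)]
    have hav : a < j * b + k * c := by omega
    have hfa : (j * b + k * c - a) + a = j * b + k * c := by omega
    have hfmod : (j * b + k * c - a) ≡ j * b + k * c [MOD a] := by
      have := (Nat.add_mod_right (j * b + k * c - a) a).symm
      rw [hfa] at this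
      exact this
    have hmf : m (j * b + k * c - a) = j * b + k * c := by
      rw [hclass _ _ hfmod, hg]
    refine ⟨⟨by omega, ?_⟩, ?_, ?_, ?_⟩
    · intro hS
      have := (hmemS _).mp hS
      omega
    · exact ⟨0, j, k, by omega⟩
    · apply (hmemS _).mpr
      have h1 : m (j * b + k * c + b) ≤ j * b + k * c + b :=
        hmin _ _ (Nat.ModEq.refl _) ⟨j+1, k, by ring⟩
      have h2 : m (j * b + k * c + b) ≠ j * b + k * c + b := by
        intro h
        apply hg1
        have e : (j+1) * b + k * c = j * b + k * c + b := by ring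
        rw [e]; exact h
      have h3 : m (j * b + k * c - a + b) = m (j * b + k * c + b) :=
        hclass _ _ (hfmod.add_right b)
      obtain ⟨t, ht⟩ := (Nat.modEq_iff_dvd' h1).mp (hmod (j * b + k * c + b))
      have ht0 : t ≠ 0 := by
        rintro rfl
        simp only [Nat.mul_zero] at ht
        omega
      have h6 : a ≤ j * b + k * c + b - m (j * b + k * c + b) := by
        rw [ht]; exact Nat.le_mul_of_pos_right a (by omega)
      omega
    · apply (hmemS _).mpr
      have h1 : m (j * b + k * c + c) ≤ j * b + k * c + c :=
        hmin _ _ (Nat.ModEq.refl _) ⟨j, k+1, by ring⟩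
      have h2 : m (j * b + k * c + c) ≠ j * b + k * c + c := by
        intro h
        apply hg2
        have e : j * b + (k+1) * c = j * b + k * c + c := by ring
        rw [e]; exact h
      have h3 : m (j * b + k * c - a + c) = m (j * b + k * c + c) :=
        hclass _ _ (hfmod.add_right c)
      obtain ⟨t, ht⟩ := (Nat.modEq_iff_dvd' h1).mp (hmod (j * b + k * c + c))
      have ht0 : t ≠ 0 := by
        rintro rfl
        simp only [Nat.mul_zero] at ht
        omega
      have h6 : a ≤ j * b + k * c + c - m (j * b + k * c + c) := by
        rw [ht]; exact Nat.le_mul_of_pos_right a (by omega)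
      omega
  -- the staircase maxima
  set jst := Nat.findGreatest (fun j => ∃ k, m (j * b + k * c) = j * b + k * c) a with hjst_def
  set kst := Nat.findGreatest (fun k => ∃ j, m (j * b + k * c) = j * b + k * c) a with hkst_def
  have hj_ex : ∃ k, m (jst * b + k * c) = jst * b + k * c :=
    Nat.findGreatest_spec (P := fun j => ∃ k, m (j * b + k * c) = j * b + k * c)
      (Nat.zero_le a) ⟨0, good00⟩
  have hk_ex : ∃ j, m (j * b + kst * c) = j * b + kst * c :=
    Nat.findGreatest_spec (P := fun k => ∃ j, m (j * b + k * c) = j * b + k * c)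
      (Nat.zero_le a) ⟨0, good00⟩
  have hg_le_j : ∀ j k, m (j * b + k * c) = j * b + k * c → j ≤ jst := by
    intro j k h
    exact Nat.le_findGreatest (le_of_lt (good_lt j k h).1) ⟨k, h⟩
  have hg_le_k : ∀ j k, m (j * b + k * c) = j * b + k * c → k ≤ kst := by
    intro j k h
    exact Nat.le_findGreatest (le_of_lt (good_lt j k h).2) ⟨j, h⟩
  have hjlt : jst < a := by
    obtain ⟨k0, hk0⟩ := hj_ex
    exact (good_lt _ _ hk0).1
  have hklt : kst < a := by
    obtain ⟨j0, hj0⟩ := hk_ex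
    exact (good_lt _ _ hj0).2
  by_cases hbox : m (jst * b + kst * c) = jst * b + kst * c
  · -- box case: contradiction
    exfalso
    clear hjst_def hkst_def
    clear_value jst kst
    -- counting: (jst+1)*(kst+1) = a
    have hcard : (jst + 1) * (kst + 1) = a := by
      have h1 : ((Finset.range (jst+1)) ×ˢ (Finset.range (kst+1))).card ≤ (Finset.range a).card := by
        apply Finset.card_le_card_of_injOn (fun p => (p.1 * b + p.2 * c) % a)
        · intro p hp
          simp only [Finset.mem_coe, Finset.mem_range]
          exact Nat.mod_lt _ (by omega)
        · intro p hp q hq h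
          simp only [Finset.mem_coe, Finset.mem_product, Finset.mem_range] at hp hq
          have hgp : m (p.1 * b + p.2 * c) = p.1 * b + p.2 * c :=
            good_mono jst kst p.1 p.2 (by omega) (by omega) hbox
          have hgq : m (q.1 * b + q.2 * c) = q.1 * b + q.2 * c :=
            good_mono jst kst q.1 q.2 (by omega) (by omega) hbox
          have hcl : m (p.1 * b + p.2 * c) = m (q.1 * b + q.2 * c) :=
            hclass _ _ (show Nat.ModEq a _ _ from h)
          have heq : p.1 * b + p.2 * c = q.1 * b + q.2 * c := by omega
          have hltq : q.1 * b + q.2 * c < a * b := by rw [← hgq]; exact hmlt _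
          obtain ⟨e1, e2⟩ := huniq _ _ _ _ heq hltq
          exact Prod.ext e1 e2
      have hrp : ∀ r : ℕ, ∃ p : ℕ × ℕ, m r = p.1 * b + p.2 * c := by
        intro r; obtain ⟨j, k, h⟩ := hrep r; exact ⟨(j, k), h⟩
      have h2 : (Finset.range a).card ≤ ((Finset.range (jst+1)) ×ˢ (Finset.range (kst+1))).card := by
        apply Finset.card_le_card_of_injOn (fun r => Classical.choose (hrp r))
        · intro r hr
          simp only [Finset.mem_coe, Finset.mem_product, Finset.mem_range]
          have hspec := Classical.choose_spec (hrp r)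
          have hg := good_rep r _ _ hspec
          exact ⟨by have := hg_le_j _ _ hg; omega, by have := hg_le_k _ _ hg; omega⟩
        · intro r hr r' hr' h
          simp only [Finset.mem_coe, Finset.mem_range] at hr hr'
          have h1' := Classical.choose_spec (hrp r)
          have h2' := Classical.choose_spec (hrp r')
          have h'' : Classical.choose (hrp r) = Classical.choose (hrp r') := h
          rw [h''] at h1'
          have hmm : m r = m r' := by rw [h1', ← h2']
          have hmr := hmod r
          have hmr' := hmod r'
          unfold Nat.ModEq at hmr hmr'
          rw [Nat.mod_eq_of_lt hr] at hmr
          rw [Nat.mod_eq_of_lt hr'] at hmr'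
          rw [hmm] at hmr
          omega
      have h3 : ((Finset.range (jst+1)) ×ˢ (Finset.range (kst+1))).card = (jst+1) * (kst+1) := by
        rw [Finset.card_product, Finset.card_range, Finset.card_range]
      have h4 : (Finset.range a).card = a := Finset.card_range a
      omega
    -- relation for (jst+1)*b
    have hr1 : ∃ d q t, 1 ≤ d ∧ d ≤ jst + 1 ∧ q ≤ kst ∧ 1 ≤ t ∧
        d * b = q * c + a * t := by
      have h1 : m ((jst+1) * b) ≤ (jst+1) * b :=
        hmin _ _ (Nat.ModEq.refl _) ⟨jst+1, 0, by ring⟩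
      have h2 : m ((jst+1) * b) ≠ (jst+1) * b := by
        intro h
        have hg : m ((jst+1) * b + 0 * c) = (jst+1) * b + 0 * c := by simpa using h
        have := hg_le_j _ _ hg
        omega
      obtain ⟨p, q, hpq⟩ := hrep ((jst+1) * b)
      have hg : m (p * b + q * c) = p * b + q * c := good_rep _ _ _ hpq
      have hple : p ≤ jst := hg_le_j _ _ hg
      have hqle : q ≤ kst := hg_le_k _ _ hg
      obtain ⟨t, ht⟩ := (Nat.modEq_iff_dvd' h1).mp (hmod ((jst+1) * b))
      have heq2 : (jst+1) * b = a * t + m ((jst+1) * b) := (Nat.sub_eq_iff_eq_add h1).mp ht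
      have ht1 : 1 ≤ t := by
        rcases Nat.eq_zero_or_pos t with rfl | h
        · exfalso; apply h2; omega
        · exact h
      refine ⟨jst + 1 - p, q, t, by omega, by omega, hqle, ht1, ?_⟩
      have e1 : (jst + 1 - p) * b + p * b = (jst+1) * b := by
        have e0 : (jst + 1 - p) + p = jst + 1 := by omega
        calc (jst + 1 - p) * b + p * b = ((jst + 1 - p) + p) * b := by ring
          _ = (jst+1) * b := by rw [e0]
      have e2 : (jst+1) * b = a * t + (p * b + q * c) := by rw [heq2, hpq]
      linarith
    -- relation for (kst+1)*c
    have hr2 : ∃ e s u, 1 ≤ e ∧ e ≤ kst + 1 ∧ s ≤ jst ∧ 1 ≤ u ∧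
        e * c = s * b + a * u := by
      have h1 : m ((kst+1) * c) ≤ (kst+1) * c :=
        hmin _ _ (Nat.ModEq.refl _) ⟨0, kst+1, by ring⟩
      have h2 : m ((kst+1) * c) ≠ (kst+1) * c := by
        intro h
        have hg : m (0 * b + (kst+1) * c) = 0 * b + (kst+1) * c := by simpa using h
        have := hg_le_k _ _ hg
        omega
      obtain ⟨p, q, hpq⟩ := hrep ((kst+1) * c)
      have hg : m (p * b + q * c) = p * b + q * c := good_rep _ _ _ hpq
      have hple : p ≤ jst := hg_le_j _ _ hg
      have hqle : q ≤ kst := hg_le_k _ _ hg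
      obtain ⟨u, hu⟩ := (Nat.modEq_iff_dvd' h1).mp (hmod ((kst+1) * c))
      have heq2 : (kst+1) * c = a * u + m ((kst+1) * c) := (Nat.sub_eq_iff_eq_add h1).mp hu
      have hu1 : 1 ≤ u := by
        rcases Nat.eq_zero_or_pos u with rfl | h
        · exfalso; apply h2; omega
        · exact h
      refine ⟨kst + 1 - q, p, u, by omega, by omega, hple, hu1, ?_⟩
      have e1 : (kst + 1 - q) * c + q * c = (kst+1) * c := by
        have e0 : (kst + 1 - q) + q = kst + 1 := by omega
        calc (kst + 1 - q) * c + q * c = ((kst + 1 - q) + q) * c := by ring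
          _ = (kst+1) * c := by rw [e0]
      have e2 : (kst+1) * c = a * u + (p * b + q * c) := by rw [heq2, hpq]
      linarith
    obtain ⟨d, q, t, hd1, hdβ, hqk, ht1, hA⟩ := hr1
    obtain ⟨e, s, u, he1, heγ, hsj, hu1, hB⟩ := hr2
    -- integer algebra
    have hA' : (d : ℤ) * b = q * c + a * t := by exact_mod_cast hA
    have hB' : (e : ℤ) * c = s * b + a * u := by exact_mod_cast hB
    have hC : ((d : ℤ) * e - q * s) * b = a * (q * u + t * e) := by
      linear_combination (e : ℤ) * hA' + (q : ℤ) * hB'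
    have hte : (1 : ℤ) ≤ (t : ℤ) * e := by
      have : 1 ≤ t * e := Nat.mul_pos ht1 he1
      exact_mod_cast this
    have hqu : (0 : ℤ) ≤ (q : ℤ) * u := by positivity
    have hMpos : (0 : ℤ) < (q : ℤ) * u + t * e := by linarith
    have hapos : (0 : ℤ) < a := by exact_mod_cast ha
    have hbpos : (0 : ℤ) < b := by exact_mod_cast hb0
    have hNpos : (0 : ℤ) < (d : ℤ) * e - q * s := by
      have h1 : (0 : ℤ) < ((d : ℤ) * e - q * s) * b := by
        rw [hC]; exact mul_pos hapos hMpos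
      rcases mul_pos_iff.mp h1 with ⟨h2, _⟩ | ⟨_, h3⟩
      · exact h2
      · linarith
    have hdvdN : (a : ℤ) ∣ ((d : ℤ) * e - q * s) := by
      have hcop : IsCoprime (a : ℤ) (b : ℤ) := Nat.isCoprime_iff_coprime.mpr hcop1
      exact hcop.dvd_of_dvd_mul_right ⟨(q : ℤ) * u + t * e, hC⟩
    have haleN : (a : ℤ) ≤ (d : ℤ) * e - q * s := Int.le_of_dvd hNpos hdvdN
    have hcard' : ((jst : ℤ) + 1) * ((kst : ℤ) + 1) = a := by exact_mod_cast hcard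
    have hdβ' : (d : ℤ) ≤ (jst : ℤ) + 1 := by exact_mod_cast hdβ
    have heγ' : (e : ℤ) ≤ (kst : ℤ) + 1 := by exact_mod_cast heγ
    have hd1' : (1 : ℤ) ≤ d := by exact_mod_cast hd1
    have he1' : (1 : ℤ) ≤ e := by exact_mod_cast he1
    have hdeLe : (d : ℤ) * e ≤ a := by
      have h1 : (d : ℤ) * e ≤ ((jst : ℤ) + 1) * ((kst : ℤ) + 1) :=
        mul_le_mul hdβ' heγ' (by linarith) (by linarith)
      linarith
    have hqs0' : (q : ℤ) * s = 0 := by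
      linarith [mul_nonneg (Int.natCast_nonneg q) (Int.natCast_nonneg s)]
    have hdea' : (d : ℤ) * e = a := by linarith
    have hqs0 : q * s = 0 := by exact_mod_cast hqs0'
    have hdea : d * e = a := by exact_mod_cast hdea'
    -- d = jst+1 and e = kst+1
    have hdeq : d = jst + 1 := by
      by_contra hne
      have h1 : d ≤ jst := by omega
      have h2 : d * e ≤ jst * (kst + 1) := Nat.mul_le_mul h1 heγ
      have h3 : jst * (kst + 1) + (kst + 1) = (jst + 1) * (kst + 1) := by ring
      omega
    have heeq : e = kst + 1 := by
      by_contra hne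
      have h1 : e ≤ kst := by omega
      have h2 : d * e ≤ (jst + 1) * kst := Nat.mul_le_mul hdβ h1
      have h3 : (jst + 1) * kst + (jst + 1) = (jst + 1) * (kst + 1) := by ring
      omega
    subst hdeq heeq
    rcases Nat.mul_eq_zero.mp hqs0 with hq0 | hs0
    · -- q = 0 : (jst+1)*b = a*t, so a ∣ jst+1
      subst hq0
      have hβb : (jst + 1) * b = a * t := by simpa using hA
      have hadvd : a ∣ jst + 1 := hcop1.dvd_of_dvd_mul_right ⟨t, hβb⟩
      have hβa : jst + 1 = a := by
        have := Nat.le_of_dvd (by omega) hadvd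
        omega
      have hγ1 : kst + 1 = 1 := by
        rw [hβa] at hcard
        have : a * (kst + 1) = a * 1 := by rw [Nat.mul_one]; exact hcard
        exact Nat.eq_of_mul_eq_mul_left (by omega) this
      apply hc
      refine ⟨u, s, ?_⟩
      have hB2 : 1 * c = s * b + a * u := by rw [← hγ1]; exact hB
      have : c = s * b + a * u := by linarith [one_mul c]
      linarith [Nat.mul_comm a u]
    · -- s = 0 : (kst+1)*c = a*u, so a ∣ kst+1
      subst hs0
      have hγc : (kst + 1) * c = a * u := by simpa using hB
      have hadvd : a ∣ kst + 1 := hcop2.dvd_of_dvd_mul_right ⟨u, hγc⟩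
      have hγa : kst + 1 = a := by
        have := Nat.le_of_dvd (by omega) hadvd
        omega
      have hβ1 : jst + 1 = 1 := by
        rw [hγa] at hcard
        have : a * (jst + 1) = a * 1 := by
          rw [Nat.mul_one]
          calc a * (jst + 1) = (jst + 1) * a := by ring
            _ = a := hcard
        exact Nat.eq_of_mul_eq_mul_left (by omega) this
      rw [hβ1] at hA
      have hA2 : b = q * c + a * t := by linarith [one_mul b]
      rcases Nat.eq_zero_or_pos q with hq0 | hq
      · subst hq0
        have hdvdb : a ∣ b := ⟨t, by omega⟩
        have : a ∣ 1 := hcop1 ▸ Nat.dvd_gcd dvd_rfl hdvdb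
        have := Nat.dvd_one.mp this
        omega
      · have h1 : c ≤ q * c := Nat.le_mul_of_pos_left c hq
        have h2 : a ≤ a * t := Nat.le_mul_of_pos_right a ht1
        linarith
  · -- two distinct maximal elements
    obtain ⟨k0, hk0⟩ := hj_ex
    obtain ⟨j0, hj0⟩ := hk_ex
    set k1 := Nat.findGreatest (fun k => m (jst * b + k * c) = jst * b + k * c) a with hk1_def
    set j2 := Nat.findGreatest (fun j => m (j * b + kst * c) = j * b + kst * c) a with hj2_def
    have hk1 : m (jst * b + k1 * c) = jst * b + k1 * c :=
      Nat.findGreatest_spec (P := fun k => m (jst * b + k * c) = jst * b + k * c)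
        (le_of_lt (good_lt _ _ hk0).2) hk0
    have hj2 : m (j2 * b + kst * c) = j2 * b + kst * c :=
      Nat.findGreatest_spec (P := fun j => m (j * b + kst * c) = j * b + kst * c)
        (le_of_lt (good_lt _ _ hj0).1) hj0
    have hk1le : k1 ≤ kst := hg_le_k _ _ hk1
    have hj2le : j2 ≤ jst := hg_le_j _ _ hj2
    have hmax1b : ¬ (m ((jst+1) * b + k1 * c) = (jst+1) * b + k1 * c) := by
      intro h
      have := hg_le_j _ _ h
      omega
    have hmax1c : ¬ (m (jst * b + (k1+1) * c) = jst * b + (k1+1) * c) := by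
      intro h
      have h1 : k1 + 1 ≤ a := le_of_lt (good_lt _ _ h).2
      have := Nat.le_findGreatest (P := fun k => m (jst * b + k * c) = jst * b + k * c) h1 h
      omega
    have hmax2b : ¬ (m ((j2+1) * b + kst * c) = (j2+1) * b + kst * c) := by
      intro h
      have h1 : j2 + 1 ≤ a := le_of_lt (good_lt _ _ h).1
      have := Nat.le_findGreatest (P := fun j => m (j * b + kst * c) = j * b + kst * c) h1 h
      omega
    have hmax2c : ¬ (m (j2 * b + (kst+1) * c) = j2 * b + (kst+1) * c) := by
      intro h
      have := hg_le_k _ _ h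
      omega
    have hnz1 : 1 ≤ jst + k1 := by
      by_contra h; push_neg at h
      have hj : jst = 0 := by omega
      have hk : k1 = 0 := by omega
      apply hbox
      have hj20 : j2 = 0 := by omega
      rw [hj20] at hj2
      have : kst ≤ k1 := by
        apply Nat.le_findGreatest (P := fun k => m (jst * b + k * c) = jst * b + k * c) (le_of_lt hklt)
        rw [hj]
        exact hj2
      have hk0' : kst = 0 := by omega
      rw [hj, hk0']
      exact good00
    have hnz2 : 1 ≤ j2 + kst := by
      by_contra h; push_neg at h
      have hj : j2 = 0 := by omega
      have hk : kst = 0 := by omega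
      apply hbox
      have hk10 : k1 = 0 := by omega
      rw [hk10] at hk1
      rw [hk]
      exact hk1
    have hval : jst * b + k1 * c ≠ j2 * b + kst * c := by
      intro h
      have hlt : j2 * b + kst * c < a * b := by
        have := hmlt (j2 * b + kst * c)
        rw [hj2] at this
        exact this
      obtain ⟨e1, e2⟩ := huniq _ _ _ _ h hlt
      apply hbox
      rw [e1]
      exact hj2
    have hb1 : b ≤ jst * b + k1 * c := by
      rcases Nat.lt_or_ge jst 1 with h | h
      · have hk : 1 ≤ k1 := by omega
        have h1 : c ≤ k1 * c := Nat.le_mul_of_pos_left c hk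
        have h2 : jst = 0 := by omega
        rw [h2]; simp; omega
      · have h1 : 1 * b ≤ jst * b := Nat.mul_le_mul_right b h
        linarith [Nat.zero_le (k1 * c)]
    have hb2 : b ≤ j2 * b + kst * c := by
      rcases Nat.lt_or_ge j2 1 with h | h
      · have hk : 1 ≤ kst := by omega
        have h1 : c ≤ kst * c := Nat.le_mul_of_pos_left c hk
        have h2 : j2 = 0 := by omega
        rw [h2]; simp; omega
      · have h1 : 1 * b ≤ j2 * b := Nat.mul_le_mul_right b h
        linarith [Nat.zero_le (kst * c)]
    refine ⟨jst * b + k1 * c - a, j2 * b + kst * c - a, ?_,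
      maxgap jst k1 hnz1 hk1 hmax1b hmax1c, maxgap j2 kst hnz2 hj2 hmax2b hmax2c⟩
    omega
end

section
/- Let A be a finite set of positive integers with gcd 1. For a partition λ, λ is an A-core (no cell of its Young diagram has hook length in A) if and only if the beta set β(λ) is an order ideal of P(A), i.e., β(λ) ⊆ P(A) and for all x ∈ β(λ) and y ∈ P(A), if x - y ∈ S(A) then y ∈ β(λ). -/
/-- A partition: a nonincreasing list of positive integers. -/
structure ListPartition where
  parts : List ℕ
  sorted : parts.Pairwise (· ≥ ·)
  pos : ∀ x ∈ parts, 0 < x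

namespace ListPartition

/-- The i-th part (0-indexed), or 0 past the end. -/
def part (lam : ListPartition) (i : ℕ) : ℕ := lam.parts.getD i 0

/-- Hook length of the cell in (0-indexed) row i and (1-indexed) column j:
    λ_i - j + #{rows k > i with λ_k ≥ j} + 1. -/
def hook (lam : ListPartition) (i j : ℕ) : ℕ :=
  lam.part i - j + ((List.range lam.parts.length).countP
    fun k => decide (i < k ∧ j ≤ lam.part k)) + 1

/-- λ is an A-core: no hook length lies in A. -/
def IsCore (A : Finset ℕ) (lam : ListPartition) : Prop :=
  ∀ i j : ℕ, i < lam.parts.length → 1 ≤ j → j ≤ lam.part i → lam.hook i j ∉ A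

/-- The beta set of λ: first-column hook lengths {λ_i + r - i} (1-indexed form). -/
def beta (lam : ListPartition) : Finset ℕ :=
  (Finset.range lam.parts.length).image fun i => lam.part i + (lam.parts.length - 1 - i)

/-- μ is a subpartition of λ. -/
def Sub (mu lam : ListPartition) : Prop :=
  mu.parts.length ≤ lam.parts.length ∧ ∀ i : ℕ, mu.part i ≤ lam.part i

end ListPartition

/-- Membership in the numerical semigroup generated by the finite set A. -/
def SemiS (A : Finset ℕ) (n : ℕ) : Prop := ∃ f : ℕ → ℕ, n = ∑ a ∈ A, f a * a

/-- n is a gap of S(A). -/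
def GapS (A : Finset ℕ) (n : ℕ) : Prop := 0 < n ∧ ¬ SemiS A n

/-- A is UM: some A-core contains every A-core as a subpartition. -/
def UM (A : Finset ℕ) : Prop :=
  ∃ κ : ListPartition, ListPartition.IsCore A κ ∧ ∀ μ : ListPartition, ListPartition.IsCore A μ → μ.Sub κ

namespace CoreAux
open ListPartition

lemma part_pos (lam : ListPartition) {i : ℕ} (h : i < lam.parts.length) : 1 ≤ lam.part i := by
  rw [part, lam.parts.getD_eq_getElem 0 h]
  exact lam.pos _ (lam.parts.getElem_mem h)

lemma part_mono (lam : ListPartition) {i k : ℕ} (h : i ≤ k) : lam.part k ≤ lam.part i := by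
  by_cases hk : k < lam.parts.length
  · rw [part, part, lam.parts.getD_eq_getElem 0 hk,
      lam.parts.getD_eq_getElem 0 (lt_of_le_of_lt h hk)]
    rcases eq_or_lt_of_le h with rfl | h'
    · exact le_refl _
    · exact List.pairwise_iff_getElem.mp lam.sorted i k _ _ h'
  · rw [part, lam.parts.getD_eq_default 0 (by omega)]
    exact Nat.zero_le _

/-- first-column hook length -/
def bb (lam : ListPartition) (i : ℕ) : ℕ := lam.part i + (lam.parts.length - 1 - i)

lemma mem_beta {lam : ListPartition} {x : ℕ} :
    x ∈ lam.beta ↔ ∃ i, i < lam.parts.length ∧ bb lam i = x := by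
  simp [ListPartition.beta, bb]

lemma bb_mem_beta {lam : ListPartition} {i : ℕ} (h : i < lam.parts.length) : bb lam i ∈ lam.beta :=
  mem_beta.mpr ⟨i, h, rfl⟩

lemma bb_lt (lam : ListPartition) {i k : ℕ} (h : i < k) (hk : k < lam.parts.length) :
    bb lam k < bb lam i := by
  have := part_mono lam (le_of_lt h)
  unfold bb; omega

lemma bb_pos (lam : ListPartition) {i : ℕ} (h : i < lam.parts.length) : 1 ≤ bb lam i := by
  have := part_pos lam h; unfold bb; omega

lemma zero_not_mem_beta (lam : ListPartition) : 0 ∉ lam.beta := by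
  rw [mem_beta]
  rintro ⟨i, hi, h⟩
  have := bb_pos lam hi
  omega

def NN (lam : ListPartition) (i j : ℕ) : ℕ :=
  ((Finset.Ioo i lam.parts.length).filter (fun k => lam.part k < j)).card

def cc (lam : ListPartition) (i j : ℕ) : ℕ := (j - 1) + NN lam i j

lemma countP_range (n : ℕ) (p : ℕ → Prop) [DecidablePred p] :
    (List.range n).countP (fun k => decide (p k)) = ((Finset.range n).filter p).card := by
  induction n with
  | zero => simp
  | succ m ih =>
      rw [List.range_succ, Finset.range_add_one, List.countP_append, Finset.filter_insert]
      by_cases h : p m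
      · rw [if_pos h, Finset.card_insert_of_notMem (by simp)]
        simp [h, ih]
      · rw [if_neg h]; simp [h, ih]

lemma NN_MM (lam : ListPartition) {i : ℕ} (j : ℕ) (hi : i < lam.parts.length) :
    NN lam i j + ((Finset.Ioo i lam.parts.length).filter (fun k => j ≤ lam.part k)).card
      = lam.parts.length - 1 - i := by
  rw [NN]
  have h1 : ((Finset.Ioo i lam.parts.length).filter (fun k => lam.part k < j))
      = ((Finset.Ioo i lam.parts.length).filter (fun k => ¬ (j ≤ lam.part k))) := by
    apply Finset.filter_congr; intro x _; simp only [eq_iff_iff, not_le]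
  rw [h1, add_comm, Finset.card_filter_add_card_filter_not, Nat.card_Ioo]
  omega

lemma hook_eq (lam : ListPartition) {i j : ℕ} (hi : i < lam.parts.length) (h1 : 1 ≤ j)
    (h2 : j ≤ lam.part i) : lam.hook i j + cc lam i j = bb lam i := by
  have hset : ((Finset.range lam.parts.length).filter (fun k => i < k ∧ j ≤ lam.part k))
      = ((Finset.Ioo i lam.parts.length).filter (fun k => j ≤ lam.part k)) := by
    ext t; simp [Finset.mem_Ioo]; tauto
  have hc := countP_range lam.parts.length (fun k => i < k ∧ j ≤ lam.part k)
  rw [hook, hc, hset]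
  have := NN_MM lam j hi
  rw [cc, bb]
  omega

lemma cc_lt (lam : ListPartition) {i j : ℕ} (hi : i < lam.parts.length) (h1 : 1 ≤ j)
    (h2 : j ≤ lam.part i) : cc lam i j < bb lam i := by
  have h := hook_eq lam hi h1 h2
  rw [hook] at h
  omega

lemma cc_not_mem_beta (lam : ListPartition) {i j : ℕ} (hi : i < lam.parts.length) (h1 : 1 ≤ j)
    (h2 : j ≤ lam.part i) : cc lam i j ∉ lam.beta := by
  intro hmem
  obtain ⟨k, hk, hbk⟩ := mem_beta.mp hmem
  rcases le_or_gt k i with hle | hgt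
  · have h3 : bb lam i ≤ bb lam k := by
      rcases eq_or_lt_of_le hle with rfl | h'
      · exact le_refl _
      · exact le_of_lt (bb_lt lam h' hi)
    have := cc_lt lam hi h1 h2
    omega
  · by_cases hjk : j ≤ lam.part k
    · -- N ≤ r - k - 1
      have hsub : ((Finset.Ioo i lam.parts.length).filter (fun t => lam.part t < j))
          ⊆ Finset.Ioo k lam.parts.length := by
        intro t ht
        simp only [Finset.mem_filter, Finset.mem_Ioo] at ht ⊢
        refine ⟨?_, ht.1.2⟩
        by_contra hc
        have := part_mono lam (show t ≤ k by omega)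
        omega
      have := Finset.card_le_card hsub
      rw [Nat.card_Ioo] at this
      rw [cc] at hbk
      rw [NN] at hbk
      rw [bb] at hbk
      omega
    · -- N ≥ r - k
      push_neg at hjk
      have hsub : Finset.Ico k lam.parts.length
          ⊆ ((Finset.Ioo i lam.parts.length).filter (fun t => lam.part t < j)) := by
        intro t ht
        simp only [Finset.mem_filter, Finset.mem_Ioo, Finset.mem_Ico] at ht ⊢
        have := part_mono lam ht.1
        exact ⟨⟨by omega, ht.2⟩, by omega⟩
      have := Finset.card_le_card hsub
      rw [Nat.card_Ico] at this
      rw [cc, NN, bb] at hbk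
      omega

lemma cc_strictMono (lam : ListPartition) {i j j' : ℕ} (h1 : 1 ≤ j) (h : j < j') :
    cc lam i j < cc lam i j' := by
  have hsub : ((Finset.Ioo i lam.parts.length).filter (fun t => lam.part t < j))
      ⊆ ((Finset.Ioo i lam.parts.length).filter (fun t => lam.part t < j')) := by
    intro t ht
    simp only [Finset.mem_filter] at ht ⊢
    exact ⟨ht.1, by omega⟩
  have := Finset.card_le_card hsub
  rw [cc, cc, NN, NN]
  omega

lemma cc_surj (lam : ListPartition) {i c' : ℕ} (hi : i < lam.parts.length)
    (hc : c' < bb lam i) (hnb : c' ∉ lam.beta) :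
    ∃ j, 1 ≤ j ∧ j ≤ lam.part i ∧ cc lam i j = c' := by
  classical
  set r := lam.parts.length with hr
  set S1 := (Finset.Icc 1 (lam.part i)).image (cc lam i) with hS1
  set S2 := (Finset.Ioo i r).image (bb lam) with hS2
  have hinj1 : Set.InjOn (cc lam i) (Finset.Icc 1 (lam.part i)) := by
    intro a ha b hb hab
    simp only [Finset.coe_Icc, Set.mem_Icc] at ha hb
    by_contra hne
    rcases lt_or_gt_of_ne hne with h | h
    · exact absurd hab (ne_of_lt (cc_strictMono lam ha.1 h))
    · exact absurd hab.symm (ne_of_lt (cc_strictMono lam hb.1 h))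
  have hcard1 : S1.card = lam.part i := by
    rw [hS1, Finset.card_image_of_injOn hinj1, Nat.card_Icc]
    omega
  have hinj2 : Set.InjOn (bb lam) (Finset.Ioo i r) := by
    intro a ha b hb hab
    simp only [Finset.coe_Ioo, Set.mem_Ioo] at ha hb
    by_contra hne
    rcases lt_or_gt_of_ne hne with h | h
    · exact absurd hab.symm (ne_of_lt (bb_lt lam h hb.2))
    · exact absurd hab (ne_of_lt (bb_lt lam h ha.2))
  have hcard2 : S2.card = r - 1 - i := by
    rw [hS2, Finset.card_image_of_injOn hinj2, Nat.card_Ioo]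
    omega
  have hdisj : Disjoint S1 S2 := by
    rw [Finset.disjoint_left]
    intro x hx1 hx2
    obtain ⟨j, hj, hcj⟩ := Finset.mem_image.mp hx1
    obtain ⟨k, hk, hbk⟩ := Finset.mem_image.mp hx2
    simp only [Finset.mem_Icc] at hj
    simp only [Finset.mem_Ioo] at hk
    apply cc_not_mem_beta lam hi hj.1 hj.2
    rw [hcj]
    rw [← hbk]
    exact bb_mem_beta hk.2
  have hsub : S1 ∪ S2 ⊆ Finset.range (bb lam i) := by
    intro x hx
    rw [Finset.mem_union] at hx
    rw [Finset.mem_range]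
    rcases hx with hx | hx
    · obtain ⟨j, hj, hcj⟩ := Finset.mem_image.mp hx
      simp only [Finset.mem_Icc] at hj
      rw [← hcj]; exact cc_lt lam hi hj.1 hj.2
    · obtain ⟨k, hk, hbk⟩ := Finset.mem_image.mp hx
      simp only [Finset.mem_Ioo] at hk
      rw [← hbk]; exact bb_lt lam hk.1 hk.2
  have hcards : (S1 ∪ S2).card = (Finset.range (bb lam i)).card := by
    rw [Finset.card_union_of_disjoint hdisj, hcard1, hcard2, Finset.card_range, bb]
  have heq : S1 ∪ S2 = Finset.range (bb lam i) :=
    Finset.eq_of_subset_of_card_le hsub (le_of_eq hcards.symm)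
  have hc' : c' ∈ S1 ∪ S2 := by rw [heq, Finset.mem_range]; exact hc
  rw [Finset.mem_union] at hc'
  rcases hc' with hx | hx
  · obtain ⟨j, hj, hcj⟩ := Finset.mem_image.mp hx
    simp only [Finset.mem_Icc] at hj
    exact ⟨j, hj.1, hj.2, hcj⟩
  · exfalso
    obtain ⟨k, hk, hbk⟩ := Finset.mem_image.mp hx
    simp only [Finset.mem_Ioo] at hk
    exact hnb (by rw [← hbk]; exact bb_mem_beta hk.2)

/-- The core condition rephrased via beta sets. -/
lemma core_iff_beta (A : Finset ℕ) (hA : ∀ a ∈ A, 0 < a) (lam : ListPartition) :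
    lam.IsCore A ↔ ∀ a ∈ A, ∀ x ∈ lam.beta, a ≤ x → x - a ∈ lam.beta := by
  constructor
  · intro core a ha x hx hax
    obtain ⟨i, hi, rfl⟩ := mem_beta.mp hx
    by_contra hnot
    have h0 : 0 < a := hA a ha
    have hc : bb lam i - a < bb lam i := by omega
    obtain ⟨j, hj1, hj2, hcj⟩ := cc_surj lam hi hc hnot
    have hh := hook_eq lam hi hj1 hj2
    have : lam.hook i j = a := by omega
    exact core i j hi hj1 hj2 (this ▸ ha)
  · intro h i j hi h1 h2 hmem
    have hh := hook_eq lam hi h1 h2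
    have hpos : 1 ≤ lam.hook i j := by rw [hook]; omega
    have hle : lam.hook i j ≤ bb lam i := by omega
    have := h _ hmem (bb lam i) (bb_mem_beta hi) hle
    have heq : bb lam i - lam.hook i j = cc lam i j := by omega
    rw [heq] at this
    exact cc_not_mem_beta lam hi h1 h2 this

lemma semis_mem {A : Finset ℕ} {a : ℕ} (ha : a ∈ A) : SemiS A a := by
  refine ⟨fun x => if x = a then 1 else 0, ?_⟩
  rw [Finset.sum_congr rfl (fun x _ => show (if x = a then 1 else 0) * x = if x = a then x else 0
    by split <;> simp)]
  rw [Finset.sum_ite_eq' A a (fun x => x)]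
  simp [ha]

lemma semis_add {A : Finset ℕ} {m n : ℕ} (hm : SemiS A m) (hn : SemiS A n) :
    SemiS A (m + n) := by
  obtain ⟨f, hf⟩ := hm
  obtain ⟨g, hg⟩ := hn
  refine ⟨fun x => f x + g x, ?_⟩
  rw [hf, hg, ← Finset.sum_add_distrib]
  apply Finset.sum_congr rfl
  intro x _; ring

lemma semis_decomp {A : Finset ℕ} (hA : ∀ a ∈ A, 0 < a) {s : ℕ} (hs : SemiS A s)
    (hpos : 0 < s) : ∃ a ∈ A, ∃ s', SemiS A s' ∧ s = a + s' := by
  classical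
  obtain ⟨f, hf⟩ := hs
  have hex : ∃ a ∈ A, f a * a ≠ 0 := by
    by_contra hc
    push_neg at hc
    have : s = 0 := by rw [hf]; exact Finset.sum_eq_zero hc
    omega
  obtain ⟨a, ha, hfa⟩ := hex
  have hfa1 : 1 ≤ f a := Nat.pos_of_ne_zero (by intro h; apply hfa; rw [h]; ring)
  have ha0 : 0 < a := hA a ha
  have haa : a ≤ f a * a := Nat.le_mul_of_pos_left a (by omega)
  have h1 : ∑ x ∈ A, f x * x = f a * a + ∑ x ∈ A.erase a, f x * x :=
    (Finset.add_sum_erase A (fun x => f x * x) ha).symm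
  have h2 : ∑ x ∈ A, (Function.update f a (f a - 1)) x * x
      = (f a - 1) * a + ∑ x ∈ A.erase a, f x * x := by
    rw [← Finset.add_sum_erase A (fun x => (Function.update f a (f a - 1)) x * x) ha,
      Function.update_self]
    congr 1
    apply Finset.sum_congr rfl
    intro x hx
    rw [Function.update_of_ne (Finset.ne_of_mem_erase hx)]
  have h3 : f a * a = (f a - 1) * a + a := by rw [Nat.sub_mul, one_mul]; omega
  refine ⟨a, ha, s - a, ⟨Function.update f a (f a - 1), ?_⟩, by omega⟩
  rw [h2]; omega

lemma descent {A : Finset ℕ} (hA : ∀ a ∈ A, 0 < a) {lam : ListPartition}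
    (hstep : ∀ a ∈ A, ∀ x ∈ lam.beta, a ≤ x → x - a ∈ lam.beta) :
    ∀ s, SemiS A s → ∀ x ∈ lam.beta, s ≤ x → x - s ∈ lam.beta := by
  intro s
  induction s using Nat.strong_induction_on with
  | _ s ih =>
    intro hs x hx hsx
    rcases Nat.eq_zero_or_pos s with rfl | hpos
    · simpa using hx
    · obtain ⟨a, ha, s', hs', rfl⟩ := semis_decomp hA hs hpos
      have h0 : 0 < a := hA a ha
      have h1 : x - s' ∈ lam.beta := ih s' (by omega) hs' x hx (by omega)
      have h2 := hstep a ha (x - s') h1 (by omega)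
      have : x - s' - a = x - (a + s') := by omega
      rwa [this] at h2

end CoreAux


theorem core_iff_beta_order_ideal (A : Finset ℕ) (hA : ∀ a ∈ A, 0 < a)
    (hgcd : A.gcd id = 1) (lam : ListPartition) :
    ListPartition.IsCore A lam ↔
      ((∀ x ∈ lam.beta, GapS A x) ∧
        ∀ x ∈ lam.beta, ∀ y : ℕ, GapS A y → y ≤ x → SemiS A (x - y) → y ∈ lam.beta) := by
  rw [CoreAux.core_iff_beta A hA lam]
  constructor
  · intro hstep
    have hdes := CoreAux.descent hA hstep
    constructor
    · intro x hx
      constructor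
      · rcases CoreAux.mem_beta.mp hx with ⟨i, hi, rfl⟩
        exact CoreAux.bb_pos lam hi
      · intro hsem
        have := hdes x hsem x hx (le_refl x)
        simp at this
        exact CoreAux.zero_not_mem_beta lam this
    · intro x hx y hy hyx hsem
      have := hdes (x - y) hsem x hx (by omega)
      have heq : x - (x - y) = y := by omega
      rwa [heq] at this
  · rintro ⟨hgap, hideal⟩ a ha x hx hax
    have hxg := hgap x hx
    have h0 : 0 < a := hA a ha
    have ha' : SemiS A a := CoreAux.semis_mem ha
    have hy : GapS A (x - a) := by
      constructor
      · rcases Nat.eq_or_lt_of_le hax with rfl | h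
        · exact absurd ha' hxg.2
        · omega
      · intro hsem
        have : SemiS A x := by
          have := CoreAux.semis_add hsem ha'
          have heq : x - a + a = x := by omega
          rwa [heq] at this
        exact hxg.2 this
    apply hideal x hx (x - a) hy (by omega)
    have heq : x - (x - a) = a := by omega
    rw [heq]
    exact ha'
end

section
/- For relatively prime positive integers a and b, any (a,b)-core is also an (a+b)-core. -/
/- ### Auxiliary material -/

namespace ListPartition

lemma part_anti (lam : ListPartition) {m m' : ℕ} (h : m ≤ m') : lam.part m' ≤ lam.part m := by
  unfold part
  rcases lt_or_ge m' lam.parts.length with h' | h'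
  · have hm : m < lam.parts.length := lt_of_le_of_lt h h'
    rw [List.getD_eq_getElem _ _ h', List.getD_eq_getElem _ _ hm]
    rcases eq_or_lt_of_le h with rfl | hlt
    · exact le_refl _
    · simpa using lam.sorted.rel_get_of_lt (a := ⟨m, hm⟩) (b := ⟨m', h'⟩) (Fin.mk_lt_mk.mpr hlt)
  · rw [List.getD_eq_default _ _ h']
    exact Nat.zero_le _

/-- The first-column hook value function. -/
def bfun (lam : ListPartition) (m : ℕ) : ℕ := lam.part m + (lam.parts.length - 1 - m)

/-- Membership in the beta set (as a predicate). -/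
def InB (lam : ListPartition) (y : ℕ) : Prop := ∃ m, m < lam.parts.length ∧ lam.bfun m = y

lemma bfun_chain (lam : ListPartition) {m m' : ℕ} (h : m ≤ m') (h' : m' < lam.parts.length) :
    lam.bfun m' + (m' - m) ≤ lam.bfun m := by
  have := lam.part_anti h
  unfold bfun
  omega

end ListPartition

/-- If a Boolean predicate is downward closed on `range L`, its count is a threshold. -/
lemma countP_threshold (p : ℕ → Bool) (L : ℕ)
    (hp : ∀ k k', k ≤ k' → k' < L → p k' = true → p k = true) :
    ∀ k, k < L → (p k = true ↔ k < (List.range L).countP p) := by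
  intro k hk
  constructor
  · intro hpk
    have hsplit : List.range L = List.range (k+1) ++ (List.range (L - (k+1))).map ((k+1) + ·) := by
      rw [← List.range_add]; congr 1; omega
    have h2 : (List.range (k+1)).countP p = k + 1 := by
      have : (List.range (k+1)).countP p = (List.range (k+1)).length :=
        List.countP_eq_length.mpr (by
          intro a ha
          have := List.mem_range.mp ha
          exact hp a k (by omega) hk hpk)
      simpa using this
    calc k < k + 1 := Nat.lt_succ_self k
    _ ≤ (List.range L).countP p := by
        rw [hsplit, List.countP_append, h2]; omega
  · intro hc
    by_contra hpk
    have hsplit : List.range L = List.range k ++ (List.range (L - k)).map (k + ·) := by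
      rw [← List.range_add]; congr 1; omega
    have h2 : ((List.range (L - k)).map (k + ·)).countP p = 0 := by
      rw [List.countP_eq_zero]
      intro a ha
      simp only [List.mem_map, List.mem_range] at ha
      obtain ⟨t, ht, rfl⟩ := ha
      intro hpa
      exact hpk (hp k (k + t) (by omega) (by omega) hpa)
    have h3 : (List.range k).countP p ≤ k := by
      simpa using List.countP_le_length (l := List.range k) (p := p)
    rw [hsplit, List.countP_append, h2] at hc
    omega

namespace ListPartition

variable (lam : ListPartition)

/-- Threshold characterization of the count appearing in `hook`. -/
lemma c_spec (i j : ℕ) (hi : i < lam.parts.length) :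
    ((List.range lam.parts.length).countP fun k => decide (i < k ∧ j ≤ lam.part k))
      + i + 1 ≤ lam.parts.length ∧
    ∀ k, i < k → k < lam.parts.length →
      (j ≤ lam.part k ↔ k <
        i + 1 + ((List.range lam.parts.length).countP fun k => decide (i < k ∧ j ≤ lam.part k))) := by
  set L := lam.parts.length with hL
  set p : ℕ → Bool := fun k => decide (i < k ∧ j ≤ lam.part k) with hp
  have hsplit : List.range L = List.range (i+1) ++ (List.range (L - (i+1))).map ((i+1) + ·) := by
    rw [← List.range_add]; congr 1; omega
  have h1 : (List.range (i+1)).countP p = 0 := by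
    rw [List.countP_eq_zero]
    intro a ha
    have := List.mem_range.mp ha
    simp only [hp, decide_eq_true_eq]
    omega
  have h2 : ((List.range (L - (i+1))).map ((i+1) + ·)).countP p
      = (List.range (L - (i+1))).countP (p ∘ ((i+1) + ·)) := List.countP_map
  have hdc : ∀ t t', t ≤ t' → t' < L - (i+1) → (p ∘ ((i+1) + ·)) t' = true →
      (p ∘ ((i+1) + ·)) t = true := by
    intro t t' htt ht' hpt
    simp only [Function.comp, hp, decide_eq_true_eq] at hpt ⊢
    refine ⟨by omega, le_trans hpt.2 (lam.part_anti (by omega))⟩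
  have hthr := countP_threshold _ _ hdc
  have hcount : (List.range L).countP p = (List.range (L - (i+1))).countP (p ∘ ((i+1) + ·)) := by
    rw [hsplit, List.countP_append, h1, h2]; omega
  constructor
  · have : (List.range (L - (i+1))).countP (p ∘ ((i+1) + ·)) ≤ L - (i+1) := by
      simpa using List.countP_le_length (l := List.range (L - (i+1))) (p := p ∘ ((i+1) + ·))
    omega
  · intro k hik hkL
    have ht := hthr (k - (i+1)) (by omega)
    rw [← hcount] at ht
    have hrw : i + 1 + (k - (i+1)) = k := by omega
    have hlhs : (p ∘ ((i+1) + ·)) (k - (i+1)) = true ↔ (i < k ∧ j ≤ lam.part k) := by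
      simp only [Function.comp_apply, hrw, hp, decide_eq_true_eq]
    rw [hlhs] at ht
    constructor
    · intro hjk
      have := ht.mp ⟨hik, hjk⟩
      omega
    · intro hk
      exact (ht.mpr (by omega)).2

/-- Threshold for the beta-value count. -/
lemma m1_spec (y : ℕ) :
    ∀ m, m < lam.parts.length →
      (y < lam.bfun m ↔ m < (List.range lam.parts.length).countP fun m => decide (y < lam.bfun m)) := by
  have hdc : ∀ m m', m ≤ m' → m' < lam.parts.length →
      (fun m => decide (y < lam.bfun m)) m' = true → (fun m => decide (y < lam.bfun m)) m = true := by
    intro m m' hmm hm' hy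
    simp only [decide_eq_true_eq] at hy ⊢
    have := lam.bfun_chain hmm hm'
    omega
  intro m hm
  simpa using countP_threshold _ _ hdc m hm

/-- Lemma A: every hook length h at a valid cell satisfies `bfun i - h ∉ β`. -/
lemma hook_not_inB {i j : ℕ} (hi : i < lam.parts.length) (hj1 : 1 ≤ j)
    (hj2 : j ≤ lam.part i) :
    ∃ y, y + lam.hook i j = lam.bfun i ∧ ¬ lam.InB y := by
  set L := lam.parts.length with hL
  obtain ⟨hcle, hthr⟩ := lam.c_spec i j hi
  set c : ℕ := (List.range L).countP fun k => decide (i < k ∧ j ≤ lam.part k) with hc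
  have hhook : lam.hook i j = lam.part i - j + c + 1 := rfl
  refine ⟨(j - 1) + (L - 1 - (i + c)), by unfold bfun; omega, ?_⟩
  rintro ⟨m, hm, hbm⟩
  unfold bfun at hbm
  rcases le_or_gt m i with hmi | him
  · -- β m ≥ β i > y
    have := lam.bfun_chain hmi hi
    unfold bfun at this
    have hji : j ≤ lam.part i := hj2
    omega
  · rcases le_or_gt m (i + c) with hm0 | hm0
    · -- i < m ≤ i + c : part m ≥ j
      have hpm : j ≤ lam.part m := (hthr m him hm).mpr (by omega)
      omega
    · -- m > i + c : part m < j
      have hpm : lam.part m < j := by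
        by_contra hge
        have := (hthr m him hm).mp (by omega)
        omega
      omega

/-- Lemma B: if x ∈ β, y < x, y ∉ β, then some valid cell has hook length x - y. -/
lemma exists_hook {x y : ℕ} (hx : lam.InB x) (hy : ¬ lam.InB y) (hyx : y < x) :
    ∃ i j, i < lam.parts.length ∧ 1 ≤ j ∧ j ≤ lam.part i ∧ lam.hook i j + y = x := by
  obtain ⟨i, hi, hbi⟩ := hx
  set m1 : ℕ := (List.range lam.parts.length).countP fun m => decide (y < lam.bfun m) with hm1
  have hthr := lam.m1_spec y
  have hm1le : m1 ≤ lam.parts.length := by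
    simpa [hm1] using List.countP_le_length (l := List.range lam.parts.length)
      (p := fun m => decide (y < lam.bfun m))
  have him1 : i < m1 := (hthr i hi).mp (by omega)
  -- e := L - m1 values of β are ≤ y - 1, so L - m1 ≤ y
  have hely : lam.parts.length - m1 ≤ y := by
    rcases lt_or_ge m1 lam.parts.length with hlt | hle
    · have hb1 : lam.bfun m1 ≤ y := by
        by_contra hgt
        have := (hthr m1 hlt).mp (by omega)
        omega
      have hb2 : lam.bfun m1 ≠ y := fun he => hy ⟨m1, hlt, he⟩
      have := lam.bfun_chain (m := m1) (m' := lam.parts.length - 1) (by omega) (by omega)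
      omega
    · omega
  set j : ℕ := y + 1 - (lam.parts.length - m1) with hj
  have hj1 : 1 ≤ j := by omega
  -- bound j ≤ part i via chain from i to m1 - 1
  have hbm11 : y + 1 ≤ lam.bfun (m1 - 1) := by
    have := (hthr (m1 - 1) (by omega)).mpr (by omega)
    omega
  have hchain1 := lam.bfun_chain (m := i) (m' := m1 - 1) (by omega) (by omega)
  have hbieq : lam.bfun i = lam.part i + (lam.parts.length - 1 - i) := rfl
  have hji : j ≤ lam.part i := by omega
  -- claim: for i < k < L, part k ≥ j ↔ k < m1
  have hkey : ∀ k, i < k → k < lam.parts.length → (j ≤ lam.part k ↔ k < m1) := by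
    intro k hik hkL
    have hbk : lam.bfun k = lam.part k + (lam.parts.length - 1 - k) := rfl
    constructor
    · intro hjk
      by_contra hk
      push_neg at hk
      -- k ≥ m1 : bfun m1 ≤ y - 1 and chain m1 → k
      have hm1L : m1 < lam.parts.length := by omega
      have hb1 : lam.bfun m1 ≤ y := by
        by_contra hgt
        have := (hthr m1 hm1L).mp (by omega)
        omega
      have hb2 : lam.bfun m1 ≠ y := fun he => hy ⟨m1, hm1L, he⟩
      have hchain := lam.bfun_chain (m := m1) (m' := k) hk hkL
      omega
    · intro hk
      -- k ≤ m1 - 1 : chain k → m1 - 1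
      have hchain := lam.bfun_chain (m := k) (m' := m1 - 1) (by omega) (by omega)
      omega
  -- the count c for (i, j) equals m1 - 1 - i
  obtain ⟨hcle, hthrc⟩ := lam.c_spec i j hi
  set c : ℕ := (List.range lam.parts.length).countP fun k => decide (i < k ∧ j ≤ lam.part k)
    with hc
  have hceq : c = m1 - 1 - i := by
    rcases lt_trichotomy c (m1 - 1 - i) with hlt | heq | hgt
    · have hk : i < i + c + 1 := by omega
      have hkL : i + c + 1 < lam.parts.length := by omega
      have h1 := (hkey (i + c + 1) hk hkL).mpr (by omega)
      have h2 := (hthrc (i + c + 1) hk hkL).mp h1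
      omega
    · exact heq
    · have hk : i < i + c := by omega
      have hkL : i + c < lam.parts.length := by omega
      have h1 := (hthrc (i + c) hk hkL).mpr (by omega)
      have h2 := (hkey (i + c) hk hkL).mp h1
      omega
  have hhook : lam.hook i j = lam.part i - j + c + 1 := rfl
  refine ⟨i, j, hi, hj1, hji, ?_⟩
  omega

end ListPartition

theorem core_ab_is_core_add (a b : ℕ) (ha : 0 < a) (hb : 0 < b)
    (hab : Nat.Coprime a b) (lam : ListPartition) (h : ListPartition.IsCore {a, b} lam) :
    ListPartition.IsCore {a + b} lam := by
  -- closure of the beta set under subtracting a or b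
  have hclose : ∀ n : ℕ, n ∈ ({a, b} : Finset ℕ) → ∀ x, lam.InB x → n ≤ x → lam.InB (x - n) := by
    intro n hn x hx hnx
    by_contra hy
    have hnpos : 0 < n := by
      rcases Finset.mem_insert.mp hn with rfl | hn'
      · exact ha
      · rw [Finset.mem_singleton] at hn'; omega
    obtain ⟨i, j, hi, hj1, hj2, hhook⟩ := lam.exists_hook hx hy (by omega)
    have : lam.hook i j = n := by omega
    exact h i j hi hj1 hj2 (this ▸ hn)
  intro i j hi hj1 hj2 hmem
  rw [Finset.mem_singleton] at hmem
  obtain ⟨y, hy, hyB⟩ := lam.hook_not_inB hi hj1 hj2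
  rw [hmem] at hy
  have hxB : lam.InB (lam.bfun i) := ⟨i, hi, rfl⟩
  have h1 : lam.InB (lam.bfun i - a) :=
    hclose a (Finset.mem_insert_self a {b}) _ hxB (by omega)
  have h2 : lam.InB (lam.bfun i - a - b) :=
    hclose b (by simp) _ h1 (by omega)
  have : lam.bfun i - a - b = y := by omega
  exact hyB (this ▸ h2)
end
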